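/- The function f : SG → ℝ defined by f(x₁, x₂) = x₁ is Lipschitz continuous but is not of bounded variation on SG in the sense of definition (A): Σ_{w ∈ {1,2,3}^n} R_f[u_w(SG)] = (3/2)^n → ∞ as n → ∞. -/

import Mathlib

open Set Metric MeasureTheory Filter ENNReal

noncomputable section

/-- The three vertices of the equilateral triangle generating the Sierpinski gasket. -/
def q : Fin 3 → ℝ × ℝ := ![(0,0), (1,0), (1/2, Real.sqrt 3 / 2)]

/-- The contraction maps of the IFS: `u i x = (x + q i)/2`. -/
def u (i : Fin 3) (x : ℝ × ℝ) : ℝ × ℝ := (2⁻¹ : ℝ) • (x + q i)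

/-- The address map of the IFS. -/
def addr (σ : ℕ → Fin 3) : ℝ × ℝ := ∑' n, ((2:ℝ)⁻¹ ^ (n+1)) • q (σ n)

/-- The Sierpinski gasket, as the set of points with an address. -/
def SG : Set (ℝ × ℝ) := Set.range addr

/-- Composition `u_{w₁} ∘ ⋯ ∘ u_{w_n}` along a word `w`. -/
def uw : List (Fin 3) → (ℝ × ℝ) → (ℝ × ℝ)
  | [] => id
  | i :: w => u i ∘ uw w

/-- The level-`n` cell of `SG` indexed by a word `w ∈ {1,2,3}^n`. -/
def cell {n : ℕ} (w : Fin n → Fin 3) : Set (ℝ × ℝ) := uw (List.ofFn w) '' SG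

/-- Oscillation (maximum range) `R_f[X]` of `f` over `X`, valued in `ℝ≥0∞`. -/
def osc (f : ℝ × ℝ → ℝ) (X : Set (ℝ × ℝ)) : ℝ≥0∞ :=
  ⨆ x ∈ X, ⨆ y ∈ X, ENNReal.ofReal |f x - f y|

/-- Total oscillation of order `n`: `R(n,f) = Σ_{w ∈ {1,2,3}^n} R_f[u_w(SG)]`. -/
def oscSum (n : ℕ) (f : ℝ × ℝ → ℝ) : ℝ≥0∞ :=
  ∑ w : Fin n → Fin 3, osc f (cell w)

/-- Total variation in the sense of definition (A). -/
def VA (f : ℝ × ℝ → ℝ) : ℝ≥0∞ := ⨆ n : ℕ, oscSum n f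

/-- Bounded variation in the sense of definition (A). -/
def BVA (f : ℝ × ℝ → ℝ) : Prop := VA f < ⊤

/-- `s = log 3 / log 2`, the dimension of `SG`. -/
def sdim : ℝ := Real.log 3 / Real.log 2

/-- Total oscillation of order `n` with exponent `s`. -/
def oscSumS (n : ℕ) (f : ℝ × ℝ → ℝ) : ℝ≥0∞ :=
  ∑ w : Fin n → Fin 3, (osc f (cell w)) ^ sdim

/-- Total variation in the sense of definition (A*). -/
def VAs (f : ℝ × ℝ → ℝ) : ℝ≥0∞ := ⨆ n : ℕ, oscSumS n f

/-- Bounded variation in the sense of definition (A*). -/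
def BVAs (f : ℝ × ℝ → ℝ) : Prop := VAs f < ⊤

/-- The graph `G_f = {(t, f t) : t ∈ SG} ⊂ ℝ³`. -/
def graphSG (f : ℝ × ℝ → ℝ) : Set ((ℝ × ℝ) × ℝ) := (fun t => (t, f t)) '' SG

/-- Smallest number of sets of diameter at most `δ` needed to cover `F`. -/
def coverNum {X : Type*} [MetricSpace X] (F : Set X) (δ : ℝ) : ℕ :=
  sInf {n : ℕ | ∃ t : Finset (Set X), t.card = n ∧ F ⊆ ⋃₀ ↑t ∧ ∀ U ∈ t, Metric.diam U ≤ δ}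

/-- Upper box (Minkowski) dimension. -/
def upperBoxDim {X : Type*} [MetricSpace X] (F : Set X) : ℝ :=
  Filter.limsup (fun δ : ℝ => Real.log (coverNum F δ) / (-Real.log δ)) (nhdsWithin 0 (Set.Ioi 0))

/-- Lower box dimension. -/
def lowerBoxDim {X : Type*} [MetricSpace X] (F : Set X) : ℝ :=
  Filter.liminf (fun δ : ℝ => Real.log (coverNum F δ) / (-Real.log δ)) (nhdsWithin 0 (Set.Ioi 0))

/-- The Euclidean norm on `ℝ × ℝ`. -/
def enorm2 (x : ℝ × ℝ) : ℝ := Real.sqrt (x.1 ^ 2 + x.2 ^ 2)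

/-! ### Auxiliary lemmas -/

lemma qfst_mem (i : Fin 3) : (q i).1 ∈ Set.Icc (0:ℝ) 1 := by
  fin_cases i <;> simp [q] <;> norm_num

lemma sqrt3_le_two : Real.sqrt 3 ≤ 2 := by
  calc Real.sqrt 3 ≤ Real.sqrt 4 := Real.sqrt_le_sqrt (by norm_num)
    _ = 2 := by rw [show (4:ℝ) = 2^2 by norm_num, Real.sqrt_sq (by norm_num)]

lemma qnorm_le (i : Fin 3) : ‖q i‖ ≤ 1 := by
  have h3 := sqrt3_le_two
  have h3' : (0:ℝ) ≤ Real.sqrt 3 := Real.sqrt_nonneg 3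
  fin_cases i <;> simp [q, Prod.norm_def, abs_of_nonneg, h3'] <;>
    constructor <;> norm_num <;> linarith

lemma summable_geom_shift : Summable (fun n : ℕ => (2:ℝ)⁻¹ ^ (n+1)) := by
  simp_rw [pow_succ]
  exact (summable_geometric_of_lt_one (by norm_num) (by norm_num)).mul_right _

lemma tsum_geom_shift : ∑' n : ℕ, (2:ℝ)⁻¹ ^ (n+1) = 1 := by
  simp_rw [pow_succ]
  rw [tsum_mul_right, tsum_geometric_of_lt_one (by norm_num) (by norm_num)]
  norm_num

lemma summable_addr (σ : ℕ → Fin 3) :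
    Summable (fun n => ((2:ℝ)⁻¹ ^ (n+1)) • q (σ n)) := by
  apply Summable.of_norm_bounded (g := fun n => (2:ℝ)⁻¹ ^ (n+1)) summable_geom_shift
  intro n
  rw [norm_smul]
  calc ‖(2:ℝ)⁻¹ ^ (n+1)‖ * ‖q (σ n)‖ ≤ ‖(2:ℝ)⁻¹ ^ (n+1)‖ * 1 := by
        gcongr; exact qnorm_le _
    _ = (2:ℝ)⁻¹ ^ (n+1) := by
        rw [mul_one]; exact abs_of_nonneg (by positivity)

lemma addr_fst (σ : ℕ → Fin 3) :
    (addr σ).1 = ∑' n, ((2:ℝ)⁻¹ ^ (n+1)) * (q (σ n)).1 := by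
  have := (ContinuousLinearMap.fst ℝ ℝ ℝ).map_tsum (summable_addr σ)
  simpa [addr, Prod.smul_def] using this

lemma summable_addr_fst (σ : ℕ → Fin 3) :
    Summable (fun n => ((2:ℝ)⁻¹ ^ (n+1)) * (q (σ n)).1) := by
  have := ((ContinuousLinearMap.fst ℝ ℝ ℝ).summable (summable_addr σ))
  simpa [Prod.smul_def] using this

lemma fst_mem_Icc {x : ℝ × ℝ} (hx : x ∈ SG) : x.1 ∈ Set.Icc (0:ℝ) 1 := by
  obtain ⟨σ, rfl⟩ := hx
  rw [addr_fst]
  constructor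
  · apply tsum_nonneg
    intro n
    have := (qfst_mem (σ n)).1
    positivity
  · have hle : (∑' n, ((2:ℝ)⁻¹ ^ (n+1)) * (q (σ n)).1) ≤ ∑' n : ℕ, (2:ℝ)⁻¹ ^ (n+1) := by
      apply Summable.tsum_le_tsum _ (summable_addr_fst σ) summable_geom_shift
      intro n
      have h := (qfst_mem (σ n)).2
      nlinarith [(qfst_mem (σ n)).1, pow_pos (by norm_num : (0:ℝ) < 2⁻¹) (n+1)]
    rw [tsum_geom_shift] at hle
    exact hle

lemma zero_mem_SG : ((0:ℝ), (0:ℝ)) ∈ SG := by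
  refine ⟨fun _ => 0, ?_⟩
  have hq0 : q 0 = ((0:ℝ), (0:ℝ)) := by simp [q]
  simp only [addr, hq0]
  rw [show ((0:ℝ),(0:ℝ)) = (0 : ℝ × ℝ) from rfl]
  simp

lemma one_mem_SG : ((1:ℝ), (0:ℝ)) ∈ SG := by
  refine ⟨fun _ => 1, ?_⟩
  have hq1 : q 1 = ((1:ℝ), (0:ℝ)) := by simp [q]
  simp only [addr, hq1]
  rw [Summable.tsum_smul_const summable_geom_shift, tsum_geom_shift, one_smul]

lemma osc_SG : osc (fun x : ℝ × ℝ => x.1) SG = 1 := by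
  apply le_antisymm
  · apply iSup₂_le; intro x hx
    apply iSup₂_le; intro y hy
    have hx' := fst_mem_Icc hx
    have hy' := fst_mem_Icc hy
    calc ENNReal.ofReal |x.1 - y.1| ≤ ENNReal.ofReal 1 := by
          apply ENNReal.ofReal_le_ofReal
          rw [abs_sub_le_iff]
          constructor <;> [skip; skip] <;> obtain ⟨h1,h2⟩ := hx' <;>
            obtain ⟨h3,h4⟩ := hy' <;> linarith
      _ = 1 := ENNReal.ofReal_one
  · calc (1:ℝ≥0∞) = ENNReal.ofReal |((1:ℝ),(0:ℝ)).1 - ((0:ℝ),(0:ℝ)).1| := by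
          norm_num
      _ ≤ _ := by
          apply le_iSup₂_of_le ((1:ℝ),(0:ℝ)) one_mem_SG
          exact le_iSup₂_of_le ((0:ℝ),(0:ℝ)) zero_mem_SG le_rfl

lemma uw_fst_sub (L : List (Fin 3)) (x y : ℝ × ℝ) :
    (uw L x).1 - (uw L y).1 = (2⁻¹:ℝ) ^ L.length * (x.1 - y.1) := by
  induction L with
  | nil => simp [uw]
  | cons i w ih =>
      simp only [uw, Function.comp_apply, u, Prod.smul_def, Prod.fst_add, smul_eq_mul,
        List.length_cons, pow_succ]
      rw [show (2⁻¹:ℝ) * ((uw w x).1 + (q i).1) - 2⁻¹ * ((uw w y).1 + (q i).1)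
          = 2⁻¹ * ((uw w x).1 - (uw w y).1) by ring, ih]
      ring

lemma osc_cell {n : ℕ} (w : Fin n → Fin 3) :
    osc (fun x : ℝ × ℝ => x.1) (cell w) = ENNReal.ofReal ((2⁻¹:ℝ) ^ n) := by
  have hpow : (0:ℝ) ≤ (2⁻¹:ℝ) ^ n := by positivity
  have : osc (fun x : ℝ × ℝ => x.1) (cell w)
      = ENNReal.ofReal ((2⁻¹:ℝ) ^ n) * osc (fun x : ℝ × ℝ => x.1) SG := by
    unfold osc cell
    rw [iSup_image]
    simp only [iSup_image]
    have hterm : ∀ x y : ℝ × ℝ,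
        ENNReal.ofReal |(uw (List.ofFn w) x).1 - (uw (List.ofFn w) y).1|
        = ENNReal.ofReal ((2⁻¹:ℝ) ^ n) * ENNReal.ofReal |x.1 - y.1| := by
      intro x y
      rw [uw_fst_sub, List.length_ofFn, abs_mul, abs_of_nonneg hpow,
        ENNReal.ofReal_mul hpow]
    simp_rw [hterm, ← ENNReal.mul_iSup]
  rw [this, osc_SG, mul_one]

lemma oscSum_eq (n : ℕ) :
    oscSum n (fun x : ℝ × ℝ => x.1) = ENNReal.ofReal ((3 / 2 : ℝ) ^ n) := by
  unfold oscSum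
  simp_rw [osc_cell]
  rw [Finset.sum_const, Finset.card_univ, Fintype.card_fun, Fintype.card_fin,
    Fintype.card_fin, nsmul_eq_mul]
  rw [show ((3^n : ℕ) : ℝ≥0∞) = ENNReal.ofReal ((3:ℝ)^n) by
    rw [ENNReal.ofReal_pow (by norm_num)]; norm_num]
  rw [← ENNReal.ofReal_mul (by positivity)]
  congr 1
  rw [div_pow]
  field_simp
  rw [← mul_pow]; norm_num

lemma tendsto_oscSum :
    Filter.Tendsto (fun n : ℕ => oscSum n (fun x : ℝ × ℝ => x.1))
      Filter.atTop (nhds ⊤) := by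
  simp_rw [oscSum_eq]
  exact ENNReal.tendsto_ofReal_atTop.comp
    (tendsto_pow_atTop_atTop_of_one_lt (by norm_num : (1:ℝ) < 3/2))

theorem stmt10 :
    LipschitzOnWith 1 (fun x : ℝ × ℝ => x.1) SG ∧
    (∀ n : ℕ, oscSum n (fun x : ℝ × ℝ => x.1) = ENNReal.ofReal ((3 / 2 : ℝ) ^ n)) ∧
    Filter.Tendsto (fun n : ℕ => oscSum n (fun x : ℝ × ℝ => x.1)) Filter.atTop (nhds ⊤) ∧
    ¬ BVA (fun x : ℝ × ℝ => x.1) := by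
  refine ⟨fun x _ y _ => LipschitzWith.prod_fst x y, oscSum_eq, tendsto_oscSum, ?_⟩
  intro hBVA
  obtain ⟨n, hn⟩ := (tendsto_oscSum.eventually (Ioi_mem_nhds hBVA)).exists
  exact absurd (le_iSup (fun n => oscSum n (fun x : ℝ × ℝ => x.1)) n) (not_le.2 hn)
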